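/- arXiv:2102.05890 — 3 statements merged into one kernel-verified Lean document; each statement's English description precedes it below -/
import Mathlib

section
/- Let λ > 0, σ > 0, N ∈ ℕ, and for each n ∈ {0,…,N−1} let a_n ≥ 0 and g_n ∈ ℝ, and let d > 0 satisfy d² + a_n² − 2·g_n·a_n·d > 0 for all n. Define Δd_n(x) = √(x² + a_n² − 2·g_n·a_n·x) − x. Then the distance Fisher information J(d) = (4π²/(λ²σ²)) · Σ_{n=0}^{N−1} (Δd_n'(d))² equals (4π²/(λ²σ²)) · Σ_{n=0}^{N−1} [2·d² + a_n²·(g_n² + 1) − 4·g_n·d·a_n − 2·(d − g_n·a_n)·√(d² + a_n² − 2·g_n·d·a_n)] / (d² + a_n² − 2·g_n·a_n·d). -/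
open Real

lemma aux_deriv (A G d : ℝ) (hu : 0 < d ^ 2 + A ^ 2 - 2 * G * A * d) :
    deriv (fun x : ℝ => Real.sqrt (x ^ 2 + A ^ 2 - 2 * G * A * x) - x) d
      = (2 * d - 2 * G * A) * (1 / (2 * Real.sqrt (d ^ 2 + A ^ 2 - 2 * G * A * d))) - 1 := by
  have hu' : (d ^ 2 + A ^ 2 - 2 * G * A * d) ≠ 0 := ne_of_gt hu
  have h1 : HasDerivAt (fun x : ℝ => x ^ 2 + A ^ 2 - 2 * G * A * x)
      (2 * d - 2 * G * A) d := by
    have := ((hasDerivAt_pow 2 d).add_const (A ^ 2)).sub ((hasDerivAt_id d).const_mul (2 * G * A))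
    exact this.congr_deriv (by norm_num)
  have h2 := (Real.hasDerivAt_sqrt hu').comp d h1
  have h3 := (h2.sub (hasDerivAt_id d))
  exact h3.deriv.trans (by ring)

theorem stmt_8 (lam sig d : ℝ) (hlam : 0 < lam) (hsig : 0 < sig) (hd : 0 < d)
    (N : ℕ) (a g : ℕ → ℝ) (ha : ∀ n ∈ Finset.range N, 0 ≤ a n)
    (hpos : ∀ n ∈ Finset.range N, 0 < d ^ 2 + a n ^ 2 - 2 * g n * a n * d) :
    4 * π ^ 2 / (lam ^ 2 * sig ^ 2) *
        ∑ n ∈ Finset.range N,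
          (deriv (fun x : ℝ =>
            Real.sqrt (x ^ 2 + a n ^ 2 - 2 * g n * a n * x) - x) d) ^ 2 =
      4 * π ^ 2 / (lam ^ 2 * sig ^ 2) *
        ∑ n ∈ Finset.range N,
          (2 * d ^ 2 + a n ^ 2 * (g n ^ 2 + 1) - 4 * g n * d * a n -
            2 * (d - g n * a n) *
              Real.sqrt (d ^ 2 + a n ^ 2 - 2 * g n * d * a n)) /
            (d ^ 2 + a n ^ 2 - 2 * g n * a n * d) := by
  congr 1
  apply Finset.sum_congr rfl
  intro n hn
  have hu := hpos n hn
  set u := d ^ 2 + (a n) ^ 2 - 2 * g n * a n * d with hudef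
  have hsq : 0 < Real.sqrt u := Real.sqrt_pos.mpr hu
  have hsq2 : Real.sqrt u ^ 2 = u := Real.sq_sqrt hu.le
  rw [aux_deriv (a n) (g n) d hu]
  rw [← hudef]
  have hcomm : d ^ 2 + (a n) ^ 2 - 2 * g n * d * a n = u := by rw [hudef]; ring
  rw [hcomm]
  field_simp
  nlinarith [hsq2, hsq]
end

section
/- Let λ > 0, σ > 0, D > 0, d > 0, and N ∈ ℕ. Consider a circular array of N antennas q_n = ((0, (D/2)·sin(2πn/N), (D/2)·cos(2πn/N)) ∈ ℝ³, n = 0,…,N−1, reference point q₀ = 0, and a source at p = (d, 0, 0). Define Δd_n(x) = ‖(x,0,0) − q_n‖ − x for x > 0. Then the distance Fisher information (4π²/(λ²σ²))·Σ_{n=0}^{N−1} (Δd_n'(d))² equals (4·N·π²/(λ²σ²)) · (2 + D²/(4d²) − 2·√(1 + D²/(4d²))) / (1 + D²/(4d²)). -/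
open Real

/-- The point of ℝ³ (with the Euclidean norm) with coordinates `x`, `y`, `z`. -/
noncomputable def vec3 (x y z : ℝ) : EuclideanSpace ℝ (Fin 3) :=
  (WithLp.equiv 2 (Fin 3 → ℝ)).symm ![x, y, z]

lemma norm_vec3_sub (x a b : ℝ) :
    ‖vec3 x 0 0 - vec3 0 a b‖ = Real.sqrt (x ^ 2 + (a ^ 2 + b ^ 2)) := by
  simp [vec3, EuclideanSpace.norm_eq, Fin.sum_univ_three]
  ring_nf

lemma deriv_aux (c d : ℝ) (hc : 0 < c) :
    deriv (fun x : ℝ => Real.sqrt (x ^ 2 + c) - x) d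
      = d / Real.sqrt (d ^ 2 + c) - 1 := by
  have hpos : 0 < d ^ 2 + c := by positivity
  have hs : 0 < Real.sqrt (d ^ 2 + c) := Real.sqrt_pos.2 hpos
  have h1 : HasDerivAt (fun x : ℝ => x ^ 2 + c) (2 * d) d := by
    simpa using ((hasDerivAt_pow 2 d).add_const c)
  have h2 : HasDerivAt (fun x : ℝ => Real.sqrt (x ^ 2 + c))
      (1 / (2 * Real.sqrt (d ^ 2 + c)) * (2 * d)) d :=
    (Real.hasDerivAt_sqrt hpos.ne').comp d h1
  have h3 : deriv (fun x : ℝ => Real.sqrt (x ^ 2 + c) - x) d = _ := (h2.sub (hasDerivAt_id d)).deriv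
  rw [h3]
  field_simp

theorem stmt_11 (lam sig D d : ℝ) (hlam : 0 < lam) (hsig : 0 < sig)
    (hD : 0 < D) (hd : 0 < d) (N : ℕ) :
    4 * π ^ 2 / (lam ^ 2 * sig ^ 2) *
        ∑ n ∈ Finset.range N,
          (deriv (fun x : ℝ =>
            ‖vec3 x 0 0 -
              vec3 0 (D / 2 * Real.sin (2 * π * n / N))
                (D / 2 * Real.cos (2 * π * n / N))‖ - x) d) ^ 2 =
      4 * N * π ^ 2 / (lam ^ 2 * sig ^ 2) *
        ((2 + D ^ 2 / (4 * d ^ 2) - 2 * Real.sqrt (1 + D ^ 2 / (4 * d ^ 2))) /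
          (1 + D ^ 2 / (4 * d ^ 2))) := by
  have hc : (0:ℝ) < D ^ 2 / 4 := by positivity
  have hterm : ∀ n ∈ Finset.range N,
      (deriv (fun x : ℝ =>
            ‖vec3 x 0 0 -
              vec3 0 (D / 2 * Real.sin (2 * π * n / N))
                (D / 2 * Real.cos (2 * π * n / N))‖ - x) d) ^ 2
        = (d / Real.sqrt (d ^ 2 + D ^ 2 / 4) - 1) ^ 2 := by
    intro n _
    have hab : (D / 2 * Real.sin (2 * π * n / N)) ^ 2
        + (D / 2 * Real.cos (2 * π * n / N)) ^ 2 = D ^ 2 / 4 := by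
      have := Real.sin_sq_add_cos_sq (2 * π * n / N)
      nlinarith [this]
    have hfun : (fun x : ℝ =>
            ‖vec3 x 0 0 -
              vec3 0 (D / 2 * Real.sin (2 * π * n / N))
                (D / 2 * Real.cos (2 * π * n / N))‖ - x)
        = fun x : ℝ => Real.sqrt (x ^ 2 + D ^ 2 / 4) - x := by
      funext x
      rw [norm_vec3_sub, hab]
    rw [hfun, deriv_aux _ _ hc]
  rw [Finset.sum_congr rfl hterm, Finset.sum_const, Finset.card_range, nsmul_eq_mul]
  set s := Real.sqrt (d ^ 2 + D ^ 2 / 4) with hs_def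
  have hspos : 0 < s := Real.sqrt_pos.2 (by positivity)
  have hs2 : s ^ 2 = d ^ 2 + D ^ 2 / 4 := Real.sq_sqrt (by positivity)
  have hsq : Real.sqrt (1 + D ^ 2 / (4 * d ^ 2)) = s / d := by
    rw [show (1 + D ^ 2 / (4 * d ^ 2)) = (d ^ 2 + D ^ 2 / 4) / d ^ 2 by field_simp,
      Real.sqrt_div (by positivity), Real.sqrt_sq hd.le]
  rw [hsq]
  have h1 : 1 + D ^ 2 / (4 * d ^ 2) = s ^ 2 / d ^ 2 := by
    rw [hs2]; field_simp
  have h2 : 2 + D ^ 2 / (4 * d ^ 2) - 2 * (s / d) = (s - d) ^ 2 / d ^ 2 := by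
    rw [show (s - d) ^ 2 = s ^ 2 - 2 * s * d + d ^ 2 by ring, hs2]
    field_simp; ring
  have key : (d / s - 1) ^ 2
      = (2 + D ^ 2 / (4 * d ^ 2) - 2 * (s / d)) / (1 + D ^ 2 / (4 * d ^ 2)) := by
    rw [h1, h2]
    field_simp
    ring
  rw [key]
  ring
end

section
/- Let λ > 0, σ > 0, D > 0, N ∈ ℕ, and for each n ∈ {0,…,N−1} let g_n ∈ ℝ, and let d > 0 satisfy 4d² + D² − 4·g_n·d·D > 0 for all n. Define Δd_n(x) = √(x² + (D/2)² − 2·g_n·(D/2)·x) − x. Then the distance Fisher information (4π²/(λ²σ²))·Σ_{n=0}^{N−1} (Δd_n'(d))² equals (4π²/(λ²σ²))·Σ_{n=0}^{N−1} [8d² + D²·(g_n² + 1) − 8·g_n·d·D − 2·(2d − g_n·D)·√(4d² + D² − 4·g_n·d·D)] / (4d² + D² − 4·g_n·d·D). -/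
open Real

theorem stmt_19 (lam sig D d : ℝ) (hlam : 0 < lam) (hsig : 0 < sig)
    (hD : 0 < D) (hd : 0 < d) (N : ℕ) (g : ℕ → ℝ)
    (hpos : ∀ n ∈ Finset.range N, 0 < 4 * d ^ 2 + D ^ 2 - 4 * g n * d * D) :
    4 * π ^ 2 / (lam ^ 2 * sig ^ 2) *
        ∑ n ∈ Finset.range N,
          (deriv (fun x : ℝ =>
            Real.sqrt (x ^ 2 + (D / 2) ^ 2 - 2 * g n * (D / 2) * x) - x) d) ^ 2 =
      4 * π ^ 2 / (lam ^ 2 * sig ^ 2) *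
        ∑ n ∈ Finset.range N,
          (8 * d ^ 2 + D ^ 2 * (g n ^ 2 + 1) - 8 * g n * d * D -
            2 * (2 * d - g n * D) *
              Real.sqrt (4 * d ^ 2 + D ^ 2 - 4 * g n * d * D)) /
            (4 * d ^ 2 + D ^ 2 - 4 * g n * d * D) := by
  congr 1
  refine Finset.sum_congr rfl fun n hn => ?_
  have hS : 0 < 4 * d ^ 2 + D ^ 2 - 4 * g n * d * D := hpos n hn
  set S := 4 * d ^ 2 + D ^ 2 - 4 * g n * d * D with hSdef
  have hSdef' : S = 4 * d ^ 2 + D ^ 2 - 4 * g n * d * D := hSdef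
  have hQ : d ^ 2 + (D / 2) ^ 2 - 2 * g n * (D / 2) * d = S / 4 := by
    rw [hSdef]; ring
  have hQpos : 0 < d ^ 2 + (D / 2) ^ 2 - 2 * g n * (D / 2) * d := by
    rw [hQ]; linarith
  have hu : HasDerivAt (fun x : ℝ => x ^ 2 + (D / 2) ^ 2 - 2 * g n * (D / 2) * x)
      (2 * d - 2 * g n * (D / 2)) d := by
    simpa [Pi.sub_def] using ((hasDerivAt_pow 2 d).add_const ((D / 2) ^ 2)).sub
      ((hasDerivAt_id d).const_mul (2 * g n * (D / 2)))
  have hsq : HasDerivAt (fun x : ℝ =>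
      Real.sqrt (x ^ 2 + (D / 2) ^ 2 - 2 * g n * (D / 2) * x) - x)
      (1 / (2 * Real.sqrt (d ^ 2 + (D / 2) ^ 2 - 2 * g n * (D / 2) * d)) *
        (2 * d - 2 * g n * (D / 2)) - 1) d := by
    have := (Real.hasDerivAt_sqrt (ne_of_gt hQpos)).comp d hu
    simpa [Pi.sub_def, Function.comp_def] using this.sub (hasDerivAt_id d)
  rw [hsq.deriv, hQ]
  have hs4 : Real.sqrt (S / 4) = Real.sqrt S / 2 := by
    rw [Real.sqrt_div hS.le, show Real.sqrt 4 = 2 by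
      rw [show (4:ℝ) = 2 ^ 2 by norm_num, Real.sqrt_sq (by norm_num : (0:ℝ) ≤ 2)]]
  rw [hs4]
  have key : ∀ s : ℝ, 0 < s → s ^ 2 = S →
      (1 / (2 * (s / 2)) * (2 * d - 2 * g n * (D / 2)) - 1) ^ 2 =
        (8 * d ^ 2 + D ^ 2 * (g n ^ 2 + 1) - 8 * g n * d * D -
          2 * (2 * d - g n * D) * s) / S := by
    intro s hsp hs
    rw [← hs]
    field_simp
    linear_combination hs + hSdef'
  exact key _ (Real.sqrt_pos.mpr hS) (Real.sq_sqrt hS.le)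
end
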